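/- Let Φ be a totally ordered abelian group and let W be a well-ordered subset of the set Φ_{>0} of strictly positive elements. Then the subsemigroup of Φ generated by W (all finite sums of elements of W) is well-ordered for the induced order. -/

import Mathlib

/-- B. H. Neumann's lemma: the subsemigroup generated by a well-ordered set of
strictly positive elements of a totally ordered abelian group is well-ordered. -/
theorem neumann_wellOrdered_closure (Φ : Type*) [AddCommGroup Φ] [LinearOrder Φ]
    [IsOrderedAddMonoid Φ]
    (W : Set Φ) (hpos : ∀ x ∈ W, 0 < x) (hwo : W.IsWF) :
    (AddSubsemigroup.closure W : Set Φ).IsWF := by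
  have h := hwo.isPWO.addSubmonoid_closure (fun x hx => (hpos x hx).le)
  refine (h.mono ?_).isWF
  intro x hx
  exact AddSubsemigroup.closure_le (S := (AddSubmonoid.closure W).toAddSubsemigroup)
    |>.2 AddSubmonoid.subset_closure hx
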